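/- Let k be a field, G a finite group, and E a k-vector space equipped with a representation ρ of G. Let S be a finite set with a G-action, and let (E_s)_{s ∈ S} be a family of k-subspaces of E forming an internal direct sum decomposition E = ⊕_{s ∈ S} E_s such that ρ(γ) maps E_s onto E_{γ·s} for every γ ∈ G and s ∈ S. For each s ∈ S, E_s is then a module over the group algebra k[G_s], where G_s = Stab_G(s) is the stabilizer of s. Then for any set T ⊆ S containing exactly one representative from each G-orbit of S, there is an isomorphism of k[G]-modules E ≅ ⊕_{s ∈ T} (k[G] ⊗_{k[G_s]} E_s), where k[G] ⊗_{k[G_s]} E_s is the representation of G induced from the G_s-representation E_s. -/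

import Mathlib

set_option maxHeartbeats 1600000
set_option synthInstance.maxHeartbeats 400000
open TensorProduct MulAction DirectSum

/-- The action of a group element `γ : G` as a `k`-linear endomorphism of a module `E` over
the group algebra `k[G]` (equivalently, of a representation of `G` over `k`). -/
noncomputable def groupSmulLinearMap (k G E : Type*) [CommSemiring k] [Group G]
    [AddCommMonoid E] [Module k E] [Module (MonoidAlgebra k G) E]
    [IsScalarTower k (MonoidAlgebra k G) E] (γ : G) : E →ₗ[k] E where
  toFun v := (MonoidAlgebra.of k G γ : MonoidAlgebra k G) • v
  map_add' u v := smul_add _ u v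
  map_smul' a v := (smul_comm a (MonoidAlgebra.of k G γ : MonoidAlgebra k G) v).symm

/-- The `k[G]`-submodule of relations defining the induced module
`k[G] ⊗_{k[G_s]} E_s`: it is spanned by the elements `h ⊗ v - 1 ⊗ (h • v)` for
`h` in the stabilizer `G_s` of `s` and `v ∈ E_s` (here `w = h • v` is the element of `E_s`
to which `h` sends `v`). -/
noncomputable def inducedRelations (k G E : Type*) [CommRing k] [Group G]
    [AddCommGroup E] [Module k E] [Module (MonoidAlgebra k G) E]
    [IsScalarTower k (MonoidAlgebra k G) E] {S : Type*} [MulAction G S]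
    (Esub : S → Submodule k E) (s : S) :
    Submodule (MonoidAlgebra k G) (MonoidAlgebra k G ⊗[k] (Esub s)) :=
  Submodule.span (MonoidAlgebra k G)
    { x | ∃ (h : stabilizer G s) (v w : Esub s),
        (MonoidAlgebra.of k G (h : G) : MonoidAlgebra k G) • (v : E) = (w : E) ∧
        x = (MonoidAlgebra.of k G (h : G) : MonoidAlgebra k G) ⊗ₜ[k] v - (1 : MonoidAlgebra k G) ⊗ₜ[k] w }

/-- The induced `k[G]`-module `k[G] ⊗_{k[G_s]} E_s` of the `G_s`-subrepresentation `E_s`,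
realized as the quotient of `k[G] ⊗_k E_s` by the relations `x·h ⊗ v = x ⊗ (h • v)` for
`h ∈ G_s`. -/
noncomputable abbrev inducedModule (k G E : Type*) [CommRing k] [Group G]
    [AddCommGroup E] [Module k E] [Module (MonoidAlgebra k G) E]
    [IsScalarTower k (MonoidAlgebra k G) E] {S : Type*} [MulAction G S]
    (Esub : S → Submodule k E) (s : S) :=
  (MonoidAlgebra k G ⊗[k] (Esub s)) ⧸ inducedRelations k G E Esub s

/-- Let `k` be a field, `G` a finite group, and `E` a representation of `G` over `k`
(that is, a module over the group algebra `k[G]`).  Suppose `E = ⊕_{s ∈ S} E_s` is an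
internal direct sum decomposition indexed by a finite `G`-set `S`, such that the action of
`γ ∈ G` maps `E_s` onto `E_{γ • s}`.  Then, for any set `T ⊆ S` containing exactly one
representative of each `G`-orbit, `E` is isomorphic as a `k[G]`-module to the direct sum
over `s ∈ T` of the representations `k[G] ⊗_{k[G_s]} E_s` induced from the stabilizers. -/
theorem directSum_inducedModule_equiv
    (k : Type*) [Field k] (G : Type*) [Group G] [Fintype G]
    (E : Type*) [AddCommGroup E] [Module k E] [Module (MonoidAlgebra k G) E]
    [IsScalarTower k (MonoidAlgebra k G) E]
    (S : Type*) [Fintype S] [DecidableEq S] [MulAction G S]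
    (Esub : S → Submodule k E)
    (hInternal : DirectSum.IsInternal Esub)
    (hmap : ∀ (γ : G) (s : S), (Esub s).map (groupSmulLinearMap k G E γ) = Esub (γ • s))
    (T : Set S) (hT : ∀ s : S, ∃! t : S, t ∈ T ∧ t ∈ MulAction.orbit G s) :
    Nonempty (E ≃ₗ[MonoidAlgebra k G] ⨁ t : T, inducedModule k G E Esub (t : S)) := by
  classical
  -- the "action" map from each induced module to `E`
  let b : ∀ t : S, MonoidAlgebra k G →ₗ[MonoidAlgebra k G] (Esub t →ₗ[k] E) := fun t =>
    { toFun := fun x => x • ((Esub t).subtype)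
      map_add' := fun x y => add_smul x y _
      map_smul' := fun a x => mul_smul a x _ }
  let L : ∀ t : S, (MonoidAlgebra k G ⊗[k] Esub t) →ₗ[MonoidAlgebra k G] E := fun t =>
    TensorProduct.AlgebraTensorModule.lift (b t)
  have hL : ∀ (t : S) (x : MonoidAlgebra k G) (v : Esub t),
      L t (x ⊗ₜ[k] v) = x • (v : E) := fun t x v => rfl
  have hrel : ∀ t : S, inducedRelations k G E Esub t ≤ LinearMap.ker (L t) := by
    intro t
    rw [inducedRelations, Submodule.span_le]
    rintro x ⟨h, v, w, hw, rfl⟩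
    simp only [SetLike.mem_coe, LinearMap.mem_ker, map_sub, hL, one_smul, hw, sub_self]
  let φ : ∀ t : S, inducedModule k G E Esub t →ₗ[MonoidAlgebra k G] E := fun t =>
    Submodule.liftQ _ _ (hrel t)
  have hφ : ∀ (t : S) (x : MonoidAlgebra k G) (v : Esub t),
      φ t (Submodule.Quotient.mk (x ⊗ₜ[k] v)) = x • (v : E) := fun t x v => rfl
  let Φ : (⨁ t : T, inducedModule k G E Esub (t : S)) →ₗ[MonoidAlgebra k G] E :=
    DirectSum.toModule _ _ _ (fun t : T => φ (t : S))
  have hΦof : ∀ (t : T) (z : inducedModule k G E Esub (t : S)),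
      Φ (DirectSum.of (fun t : T => inducedModule k G E Esub (t : S)) t z) = φ (t : S) z := by
    intro t z
    rw [← DirectSum.lof_eq_of (MonoidAlgebra k G), DirectSum.toModule_lof]
  -- choice of representatives
  have hsel : ∀ s : S, ∃ (t : T) (g : G), g • s = (t : S) := by
    intro s
    obtain ⟨t, ⟨h1, h2⟩, -⟩ := hT s
    obtain ⟨g, hg⟩ := h2
    exact ⟨⟨t, h1⟩, g, hg⟩
  choose τ g hg using hsel
  have huniq : ∀ (s : S) (t : T), (t : S) ∈ MulAction.orbit G s → t = τ s := by
    intro s t h'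
    obtain ⟨t₀, -, hu⟩ := hT s
    have h1 : (t : S) = t₀ := hu _ ⟨t.2, h'⟩
    have h2 : ((τ s : S)) = t₀ := hu _ ⟨(τ s).2, ⟨g s, hg s⟩⟩
    exact Subtype.ext (h1.trans h2.symm)
  have hmem : ∀ s : S, ∀ x ∈ Esub s, groupSmulLinearMap k G E (g s) x ∈ Esub (τ s : S) := by
    intro s x hx
    rw [← hg s, ← hmap (g s) s]
    exact ⟨x, hx, rfl⟩
  let m : ∀ s : S, Esub s →ₗ[k] Esub (τ s : S) := fun s =>
    (groupSmulLinearMap k G E (g s)).restrict (hmem s)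
  have hm : ∀ (s : S) (v : Esub s),
      ((m s v : E)) = (MonoidAlgebra.of k G (g s) : MonoidAlgebra k G) • (v : E) := fun s v => rfl
  let Ψfam : ∀ s : S, Esub s →ₗ[k] ⨁ t : T, inducedModule k G E Esub (t : S) := fun s =>
    (DirectSum.lof k T (fun t : T => inducedModule k G E Esub (t : S)) (τ s)) ∘ₗ
      ((inducedRelations k G E Esub (τ s : S)).mkQ.restrictScalars k) ∘ₗ
      (TensorProduct.mk k (MonoidAlgebra k G) (Esub (τ s : S))
        (MonoidAlgebra.of k G (g s)⁻¹)) ∘ₗ (m s)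
  have hΨfam : ∀ (s : S) (v : Esub s),
      Ψfam s v = DirectSum.lof k T (fun t : T => inducedModule k G E Esub (t : S)) (τ s)
        (Submodule.Quotient.mk
          ((MonoidAlgebra.of k G (g s)⁻¹ : MonoidAlgebra k G) ⊗ₜ[k] (m s v))) := fun s v => rfl
  let D := LinearEquiv.ofBijective (DirectSum.coeLinearMap Esub) hInternal
  let Ψ : E →ₗ[k] ⨁ t : T, inducedModule k G E Esub (t : S) :=
    (DirectSum.toModule k S _ Ψfam) ∘ₗ (D.symm : E →ₗ[k] ⨁ s : S, Esub s)
  have hD : ∀ (s : S) (v : Esub s),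
      D (DirectSum.lof k S (fun s => Esub s) s v) = (v : E) := by
    intro s v
    show DirectSum.coeLinearMap Esub _ = _
    rw [DirectSum.lof_eq_of, DirectSum.coeLinearMap_of]
  have hΨe : ∀ (s : S) (v : Esub s), Ψ (v : E) = Ψfam s v := by
    intro s v
    have h1 : D.symm (v : E) = DirectSum.lof k S (fun s => Esub s) s v :=
      (LinearEquiv.symm_apply_eq D).mpr (hD s v).symm
    show DirectSum.toModule k S _ Ψfam (D.symm (v : E)) = _
    rw [h1, DirectSum.toModule_lof]
  -- Φ ∘ Ψ = id
  have hΦΨ' : ∀ x : ⨁ s : S, Esub s,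
      Φ (DirectSum.toModule k S _ Ψfam x) = DirectSum.coeLinearMap Esub x := by
    intro x
    induction x using DirectSum.induction_on with
    | zero => simp
    | add x y hx hy => rw [map_add, map_add, map_add, hx, hy]
    | of s v =>
      rw [DirectSum.coeLinearMap_of, ← DirectSum.lof_eq_of k, DirectSum.toModule_lof, hΨfam,
        DirectSum.lof_eq_of, hΦof, hφ, hm, ← mul_smul, ← map_mul, inv_mul_cancel,
        map_one, one_smul]
  have hΦΨ : ∀ e : E, Φ (Ψ e) = e := by
    intro e
    have h1 : Ψ e = DirectSum.toModule k S _ Ψfam (D.symm e) := rfl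
    rw [h1, hΦΨ' (D.symm e)]
    exact D.apply_symm_apply e
  -- Ψ ∘ Φ = id
  have hΨΦ : ∀ x : ⨁ t : T, inducedModule k G E Esub (t : S), Ψ (Φ x) = x := by
    intro x
    induction x using DirectSum.induction_on with
    | zero => simp
    | add x y hx hy => rw [map_add, map_add, hx, hy]
    | of t z =>
      rw [hΦof]
      obtain ⟨y, rfl⟩ := Submodule.mkQ_surjective _ z
      show Ψ (φ (t : S) (Submodule.Quotient.mk y)) =
        DirectSum.of (fun t : T => inducedModule k G E Esub (t : S)) t
          (Submodule.Quotient.mk y)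
      induction y using TensorProduct.induction_on with
      | zero => simp
      | add a b ha hb =>
        simp only [Submodule.Quotient.mk_add, map_add, ha, hb]
      | tmul x v =>
        induction x using MonoidAlgebra.induction_on with
        | add a b ha hb =>
          simp only [add_tmul, Submodule.Quotient.mk_add, map_add, ha, hb]
        | smul r a ha =>
          rw [show (r • a) ⊗ₜ[k] v = r • (a ⊗ₜ[k] v) from (smul_tmul' r a v).symm,
            Submodule.Quotient.mk_smul, (φ (t : S)).map_smul_of_tower, Ψ.map_smul, ha]
          exact ((DirectSum.lof k T (fun t : T => inducedModule k G E Esub (t : S)) t).map_smul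
            r _).symm
        | of γ =>
          have he : (MonoidAlgebra.of k G γ : MonoidAlgebra k G) • (v : E)
              ∈ Esub (γ • (t : S)) := by
            rw [← hmap γ (t : S)]
            exact ⟨v, v.2, rfl⟩
          have key : ∀ (s' : S) (e : E) (he' : e ∈ Esub s')
              (hts : γ • (t : S) = s')
              (hev : (MonoidAlgebra.of k G γ : MonoidAlgebra k G) • (v : E) = e),
              Ψfam s' ⟨e, he'⟩ =
                DirectSum.of (fun t : T => inducedModule k G E Esub (t : S)) t
                  (Submodule.Quotient.mk
                    ((MonoidAlgebra.of k G γ : MonoidAlgebra k G) ⊗ₜ[k] v)) := by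
            intro s' e he' hts hev
            have ht' : t = τ s' := by
              refine huniq s' t ⟨γ⁻¹, ?_⟩
              rw [← hts]
              exact inv_smul_smul γ (t : S)
            subst ht'
            rw [hΨfam, DirectSum.lof_eq_of]
            congr 1
            rw [Submodule.Quotient.eq]
            set g₀ := g s' with hg₀
            have hstab : g₀ * γ ∈ stabilizer G ((τ s' : S)) := by
              rw [MulAction.mem_stabilizer_iff, mul_smul, hts, hg s']
            have hw : (MonoidAlgebra.of k G (g₀ * γ) : MonoidAlgebra k G) • (v : E)
                = ((m s' ⟨e, he'⟩ : E)) := by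
              rw [hm, map_mul, mul_smul, hev]
            have hgen : (MonoidAlgebra.of k G (g₀ * γ) : MonoidAlgebra k G) ⊗ₜ[k] v -
                (1 : MonoidAlgebra k G) ⊗ₜ[k] (m s' ⟨e, he'⟩)
                ∈ inducedRelations k G E Esub ((τ s' : S)) :=
              Submodule.subset_span ⟨⟨g₀ * γ, hstab⟩, v, m s' ⟨e, he'⟩, hw, rfl⟩
            have h2 := (inducedRelations k G E Esub ((τ s' : S))).smul_mem
              (MonoidAlgebra.of k G g₀⁻¹) hgen
            have h3 : (MonoidAlgebra.of k G g₀⁻¹ : MonoidAlgebra k G) •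
                ((MonoidAlgebra.of k G (g₀ * γ) : MonoidAlgebra k G) ⊗ₜ[k] v -
                  (1 : MonoidAlgebra k G) ⊗ₜ[k] (m s' ⟨e, he'⟩)) =
                (MonoidAlgebra.of k G γ : MonoidAlgebra k G) ⊗ₜ[k] v -
                  (MonoidAlgebra.of k G g₀⁻¹ : MonoidAlgebra k G) ⊗ₜ[k] (m s' ⟨e, he'⟩) := by
              rw [smul_sub, smul_tmul', smul_tmul', smul_eq_mul, smul_eq_mul, mul_one,
                ← map_mul, inv_mul_cancel_left]
            rw [h3] at h2
            have h4 : (MonoidAlgebra.of k G g₀⁻¹ : MonoidAlgebra k G) ⊗ₜ[k] (m s' ⟨e, he'⟩) -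
                (MonoidAlgebra.of k G γ : MonoidAlgebra k G) ⊗ₜ[k] v =
                -((MonoidAlgebra.of k G γ : MonoidAlgebra k G) ⊗ₜ[k] v -
                  (MonoidAlgebra.of k G g₀⁻¹ : MonoidAlgebra k G) ⊗ₜ[k] (m s' ⟨e, he'⟩)) := by
              rw [neg_sub]
            rw [h4]
            exact neg_mem h2
          rw [hφ]
          have hcoe : (MonoidAlgebra.of k G γ : MonoidAlgebra k G) • (v : E) =
              ((⟨(MonoidAlgebra.of k G γ : MonoidAlgebra k G) • (v : E), he⟩ :
                Esub (γ • (t : S))) : E) := rfl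
          rw [hcoe, hΨe]
          exact key (γ • (t : S)) _ he rfl rfl
  have hbij : Function.Bijective Φ :=
    ⟨Function.LeftInverse.injective hΨΦ, Function.RightInverse.surjective hΦΨ⟩
  exact ⟨(LinearEquiv.ofBijective Φ hbij).symm⟩
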